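/- Let H ≤ G be finitely generated groups with compatible word metrics. If H is not quasi-isometrically embedded in G (i.e. H is distorted), then for every i > 0 there exist points a_i, b_i ∈ H such that every geodesic in the Cayley graph of G from a_i to b_i leaves the i-neighborhood of H. -/
import Mathlib

/-- The word length of `g` with respect to a generating set `S`. -/
noncomputable def wordLength {G : Type*} [Group G] (S : Set G) (g : G) : ℕ :=
  sInf {n : ℕ | ∃ l : List G, (∀ x ∈ l, x ∈ S) ∧ l.length = n ∧ l.prod = g}

/-- The word metric on `G` with respect to a generating set `S`. -/
noncomputable def wordDist {G : Type*} [Group G] (S : Set G) (a b : G) : ℕ :=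
  wordLength S (a⁻¹ * b)

/-- `γ 0, …, γ n` is a geodesic path in the Cayley graph of `(G,S)`. -/
def IsGeodesicPath {G : Type*} [Group G] (S : Set G) (γ : ℕ → G) (n : ℕ) : Prop :=
  (∀ i < n, (γ i)⁻¹ * γ (i + 1) ∈ S) ∧ wordDist S (γ 0) (γ n) = n

section Aux

variable {G : Type*} [Group G] {S : Set G} {g x y : G}

/-- `g` is representable as a product of elements of `S`. -/
def WReprAux (S : Set G) (g : G) : Prop :=
  ∃ l : List G, (∀ x ∈ l, x ∈ S) ∧ l.prod = g

lemma wordLength_le_aux {l : List G} (h1 : ∀ x ∈ l, x ∈ S) (h2 : l.prod = g) :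
    wordLength S g ≤ l.length :=
  Nat.sInf_le ⟨l, h1, rfl, h2⟩

lemma exists_list_wordLength (h : WReprAux S g) :
    ∃ l : List G, (∀ x ∈ l, x ∈ S) ∧ l.length = wordLength S g ∧ l.prod = g := by
  obtain ⟨l, h1, h2⟩ := h
  have hne : {n : ℕ | ∃ l : List G, (∀ x ∈ l, x ∈ S) ∧ l.length = n ∧ l.prod = g}.Nonempty :=
    ⟨l.length, l, h1, rfl, h2⟩
  obtain ⟨m, hm1, hm2, hm3⟩ := Nat.sInf_mem hne
  exact ⟨m, hm1, hm2, hm3⟩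

lemma prod_reverse_inv (l : List G) : ((l.reverse).map (·⁻¹)).prod = l.prod⁻¹ := by
  induction l with
  | nil => simp
  | cons a l ih =>
    rw [List.reverse_cons, List.map_append, List.prod_append, ih]
    simp [mul_inv_rev]

lemma wrepr_of_mem_closure (hSsymm : ∀ s ∈ S, s⁻¹ ∈ S) (h : g ∈ Subgroup.closure S) :
    WReprAux S g := by
  refine Subgroup.closure_induction (fun x hx => ⟨[x], by simp [hx]⟩) ⟨[], by simp⟩
    (fun x y _ _ ⟨l1, hl1, hp1⟩ ⟨l2, hl2, hp2⟩ =>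
      ⟨l1 ++ l2, by
        constructor
        · intro z hz; rcases List.mem_append.1 hz with h' | h'
          · exact hl1 z h'
          · exact hl2 z h'
        · simp [hp1, hp2]⟩)
    (fun x _ ⟨l, hl, hp⟩ =>
      ⟨(l.reverse).map (·⁻¹), by
        constructor
        · intro z hz
          obtain ⟨w, hw, rfl⟩ := List.mem_map.1 hz
          exact hSsymm w (hl w (List.mem_reverse.1 hw))
        · rw [prod_reverse_inv, hp]⟩) h

lemma wordLength_mul_le (hx : WReprAux S x) (hy : WReprAux S y) :
    wordLength S (x * y) ≤ wordLength S x + wordLength S y := by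
  obtain ⟨l1, h11, h12, h13⟩ := exists_list_wordLength hx
  obtain ⟨l2, h21, h22, h23⟩ := exists_list_wordLength hy
  have := wordLength_le_aux (S := S) (l := l1 ++ l2) (g := x * y) ?_ (by simp [h13, h23])
  · simpa [h12, h22] using this
  · intro z hz; rcases List.mem_append.1 hz with h' | h'
    · exact h11 z h'
    · exact h21 z h'

lemma wordLength_inv_le (hSsymm : ∀ s ∈ S, s⁻¹ ∈ S) (hx : WReprAux S x) :
    wordLength S x⁻¹ ≤ wordLength S x := by
  obtain ⟨l, h1, h2, h3⟩ := exists_list_wordLength hx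
  have := wordLength_le_aux (S := S) (l := (l.reverse).map (·⁻¹)) (g := x⁻¹) ?_ ?_
  · simpa [h2] using this
  · intro z hz
    obtain ⟨w, hw, rfl⟩ := List.mem_map.1 hz
    exact hSsymm w (h1 w (List.mem_reverse.1 hw))
  · rw [prod_reverse_inv, h3]

/-- Finiteness of balls: products of lists of bounded length from a finite set. -/
lemma ball_finite (hSfin : S.Finite) (m : ℕ) :
    {g : G | ∃ l : List G, (∀ x ∈ l, x ∈ S) ∧ l.length ≤ m ∧ l.prod = g}.Finite := by
  induction m with
  | zero =>
    apply Set.Finite.subset (Set.finite_singleton 1)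
    rintro g ⟨l, _, hl, hp⟩
    simp only [Nat.le_zero, List.length_eq_zero_iff] at hl
    simp [hl] at hp
    simp [← hp]
  | succ m ih =>
    apply Set.Finite.subset ((Set.finite_singleton (1 : G)).union (Set.Finite.image2 (· * ·) hSfin ih))
    rintro g ⟨l, hS, hl, hp⟩
    match l with
    | [] => left; simp [← hp]
    | a :: l' =>
      right
      refine ⟨a, hS a (by simp), l'.prod, ⟨l', fun x hx => hS x (by simp [hx]),
        by simp at hl; omega, rfl⟩, by simp [← hp]⟩

end Aux

theorem distorted_geodesics_leave_neighborhoods {G : Type*} [Group G]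
    (S T : Set G) (hTS : T ⊆ S) (hSfin : S.Finite) (hTfin : T.Finite)
    (hSsymm : ∀ s ∈ S, s⁻¹ ∈ S) (hTsymm : ∀ t ∈ T, t⁻¹ ∈ T)
    (hSgen : Subgroup.closure S = ⊤)
    (H : Subgroup G) (hHgen : Subgroup.closure T = H)
    (hdistorted : ¬ ∃ K ε : ℝ, 1 ≤ K ∧ 0 ≤ ε ∧ ∀ h₁ h₂ : G, h₁ ∈ H → h₂ ∈ H →
      (wordDist T h₁ h₂ : ℝ) ≤ K * (wordDist S h₁ h₂ : ℝ) + ε) :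
    ∀ i : ℕ, ∃ a b : G, a ∈ H ∧ b ∈ H ∧
      ∀ (γ : ℕ → G) (n : ℕ), IsGeodesicPath S γ n → γ 0 = a → γ n = b →
        ∃ j ≤ n, ∀ h ∈ H, i < wordDist S (γ j) h := by
  -- everything is S-representable
  have hSrep : ∀ g : G, WReprAux S g := fun g =>
    wrepr_of_mem_closure hSsymm (by rw [hSgen]; trivial)
  have hTrep : ∀ g ∈ H, WReprAux T g := fun g hg =>
    wrepr_of_mem_closure hTsymm (by rwa [hHgen])
  by_contra hcon
  push_neg at hcon
  obtain ⟨i, hi⟩ := hcon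
  -- the finite ball of radius 2i+1 in S
  have hball := ball_finite hSfin (2 * i + 1)
  set M : ℕ := hball.toFinset.sup (wordLength T) with hM
  have hMbound : ∀ g ∈ H, wordLength S g ≤ 2 * i + 1 → wordLength T g ≤ M := by
    intro g hg hlen
    apply Finset.le_sup
    rw [Set.Finite.mem_toFinset]
    obtain ⟨l, h1, h2, h3⟩ := exists_list_wordLength (hSrep g)
    exact ⟨l, h1, h2.trans_le hlen, h3⟩
  apply hdistorted
  refine ⟨M + 1, 2 * M, by norm_num, by positivity, ?_⟩
  intro a b ha hb
  obtain ⟨γ, n, hgeo, hγ0, hγn, hnear⟩ := hi a b ha hb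
  -- choose nearby points of H
  have hchoice : ∀ j : ℕ, ∃ h : G, h ∈ H ∧ (j ≤ n → wordDist S (γ j) h ≤ i) := by
    intro j
    by_cases hj : j ≤ n
    · obtain ⟨h, hh1, hh2⟩ := hnear j hj
      exact ⟨h, hh1, fun _ => hh2⟩
    · exact ⟨1, H.one_mem, fun h' => absurd h' hj⟩
  choose h hhH hhd using hchoice
  -- consecutive chosen points are close in S
  have hstep : ∀ j < n, wordLength T ((h j)⁻¹ * h (j + 1)) ≤ M := by
    intro j hj
    have hj1 : j ≤ n := le_of_lt hj
    have hj2 : j + 1 ≤ n := hj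
    apply hMbound _ (H.mul_mem (H.inv_mem (hhH j)) (hhH (j + 1)))
    have key : (h j)⁻¹ * h (j + 1) =
        ((γ j)⁻¹ * h j)⁻¹ * ((γ j)⁻¹ * γ (j + 1)) * ((γ (j + 1))⁻¹ * h (j + 1)) := by
      group
    rw [key]
    calc wordLength S _ ≤ wordLength S (((γ j)⁻¹ * h j)⁻¹ * ((γ j)⁻¹ * γ (j + 1)))
          + wordLength S ((γ (j + 1))⁻¹ * h (j + 1)) :=
        wordLength_mul_le (hSrep _) (hSrep _)
      _ ≤ wordLength S ((γ j)⁻¹ * h j)⁻¹ + wordLength S ((γ j)⁻¹ * γ (j + 1))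
          + wordLength S ((γ (j + 1))⁻¹ * h (j + 1)) := by
        exact Nat.add_le_add_right (wordLength_mul_le (hSrep _) (hSrep _)) _
      _ ≤ i + 1 + i := by
        gcongr
        · exact (wordLength_inv_le hSsymm (hSrep _)).trans (hhd j hj1)
        · exact wordLength_le_aux (l := [(γ j)⁻¹ * γ (j + 1)])
            (by simpa using hgeo.1 j hj) (by simp)
        · exact hhd (j + 1) hj2
      _ ≤ 2 * i + 1 := by omega
  -- telescoping
  have htele : ∀ j ≤ n, wordLength T ((h 0)⁻¹ * h j) ≤ M * j := by
    intro j
    induction j with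
    | zero => intro _; simpa using wordLength_le_aux (S := T) (l := []) (by simp) (by simp)
    | succ j ih =>
      intro hj
      have hj' : j ≤ n := by omega
      have : (h 0)⁻¹ * h (j + 1) = ((h 0)⁻¹ * h j) * ((h j)⁻¹ * h (j + 1)) := by group
      rw [this]
      calc wordLength T _ ≤ wordLength T ((h 0)⁻¹ * h j) + wordLength T ((h j)⁻¹ * h (j + 1)) :=
            wordLength_mul_le (hTrep _ (H.mul_mem (H.inv_mem (hhH 0)) (hhH j)))
              (hTrep _ (H.mul_mem (H.inv_mem (hhH j)) (hhH (j + 1))))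
        _ ≤ M * j + M := Nat.add_le_add (ih hj') (hstep j (by omega))
        _ = M * (j + 1) := by ring
  -- endpoints: a close to h 0, b close to h n
  have hend0 : wordLength T (a⁻¹ * h 0) ≤ M := by
    apply hMbound _ (H.mul_mem (H.inv_mem ha) (hhH 0))
    have : a⁻¹ * h 0 = (γ 0)⁻¹ * h 0 := by rw [hγ0]
    rw [this]
    exact (hhd 0 (by omega)).trans (by omega)
  have hendn : wordLength T ((h n)⁻¹ * b) ≤ M := by
    apply hMbound _ (H.mul_mem (H.inv_mem (hhH n)) hb)
    have : (h n)⁻¹ * b = ((γ n)⁻¹ * h n)⁻¹ := by rw [hγn]; group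
    rw [this]
    exact (wordLength_inv_le hSsymm (hSrep _)).trans ((hhd n le_rfl).trans (by omega))
  -- total bound
  have htotal : wordDist T a b ≤ M * n + 2 * M := by
    have key : a⁻¹ * b = (a⁻¹ * h 0) * ((h 0)⁻¹ * h n) * ((h n)⁻¹ * b) := by group
    unfold wordDist
    rw [key]
    calc wordLength T _ ≤ wordLength T ((a⁻¹ * h 0) * ((h 0)⁻¹ * h n))
          + wordLength T ((h n)⁻¹ * b) :=
        wordLength_mul_le (hTrep _ (H.mul_mem (H.mul_mem (H.inv_mem ha) (hhH 0))
          (H.mul_mem (H.inv_mem (hhH 0)) (hhH n)))) (hTrep _ (H.mul_mem (H.inv_mem (hhH n)) hb))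
      _ ≤ wordLength T (a⁻¹ * h 0) + wordLength T ((h 0)⁻¹ * h n)
          + wordLength T ((h n)⁻¹ * b) := by
        exact Nat.add_le_add_right (wordLength_mul_le
          (hTrep _ (H.mul_mem (H.inv_mem ha) (hhH 0)))
          (hTrep _ (H.mul_mem (H.inv_mem (hhH 0)) (hhH n)))) _
      _ ≤ M + M * n + M :=
        Nat.add_le_add (Nat.add_le_add hend0 (htele n le_rfl)) hendn
      _ = M * n + 2 * M := by ring
  -- convert to reals
  have hn : wordDist S a b = n := by rw [← hγ0, ← hγn]; exact hgeo.2
  rw [hn]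
  calc (wordDist T a b : ℝ) ≤ (M * n + 2 * M : ℕ) := by exact_mod_cast htotal
    _ = M * n + 2 * M := by push_cast; ring
    _ ≤ (M + 1) * n + 2 * M := by
      nlinarith [Nat.cast_nonneg (α := ℝ) n]
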